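/- Let f : ℝⁿ → ℝⁿ be locally Lipschitz with f(0)=0, let V ∈ C¹(ℝⁿ, ℝ₊) be positive definite and radially unbounded with ∇V(x)·f(x) < 0 for x ≠ 0. Then the function Q(x) := −∇V(x)·f(x) is continuous positive definite, and W(x) := inf{Q(y) + |y−x| : y ∈ ℝⁿ} is globally Lipschitz with Lipschitz constant 1, positive definite, and satisfies W(x) ≤ −∇V(x)·f(x) for all x. -/

import Mathlib

open Real RealInnerProductSpace

theorem stmt10 (n : ℕ) (f : EuclideanSpace ℝ (Fin n) → EuclideanSpace ℝ (Fin n))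
    (hf : LocallyLipschitz f) (hf0 : f 0 = 0)
    (V : EuclideanSpace ℝ (Fin n) → ℝ) (hVC1 : ContDiff ℝ 1 V)
    (hVnonneg : ∀ x, 0 ≤ V x) (hV0 : V 0 = 0) (hVpos : ∀ x ≠ 0, 0 < V x)
    (hVrad : ∀ M : ℝ, IsCompact {x | V x ≤ M})
    (hLyap : ∀ x ≠ 0, ⟪gradient V x, f x⟫ < 0)
    (Q W : EuclideanSpace ℝ (Fin n) → ℝ)
    (hQ : ∀ x, Q x = -⟪gradient V x, f x⟫)
    (hW : ∀ x, W x = ⨅ y : EuclideanSpace ℝ (Fin n), (Q y + ‖y - x‖)) :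
    Continuous Q ∧ (Q 0 = 0 ∧ ∀ x ≠ 0, 0 < Q x) ∧
    LipschitzWith 1 W ∧ (W 0 = 0 ∧ ∀ x ≠ 0, 0 < W x) ∧
    ∀ x, W x ≤ -⟪gradient V x, f x⟫ := by
  have hgrad : Continuous (gradient V) := by
    have h1 : Continuous (fderiv ℝ V) := hVC1.continuous_fderiv one_ne_zero
    exact (InnerProductSpace.toDual ℝ
      (EuclideanSpace ℝ (Fin n))).symm.continuous.comp h1
  have hfc : Continuous f := hf.continuous
  have hQeq : Q = fun x => -⟪gradient V x, f x⟫ := funext hQ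
  have hQc : Continuous Q := by
    rw [hQeq]; exact (hgrad.inner hfc).neg
  have hQ0 : Q 0 = 0 := by simp [hQ 0, hf0]
  have hQpos : ∀ x ≠ 0, 0 < Q x := fun x hx => by
    rw [hQ]; linarith [hLyap x hx]
  have hQnonneg : ∀ x, 0 ≤ Q x := fun x => by
    by_cases hx : x = 0
    · simp [hx, hQ0]
    · exact (hQpos x hx).le
  have hBdd : ∀ x, BddBelow (Set.range fun y => Q y + ‖y - x‖) := by
    intro x
    refine ⟨0, ?_⟩
    rintro z ⟨y, rfl⟩
    exact add_nonneg (hQnonneg y) (norm_nonneg _)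
  have hWleQ : ∀ x, W x ≤ Q x := fun x => by
    rw [hW]
    have := ciInf_le (hBdd x) x
    simpa using this
  have hWnonneg : ∀ x, 0 ≤ W x := fun x => by
    rw [hW]
    exact le_ciInf fun y => add_nonneg (hQnonneg y) (norm_nonneg _)
  have hW0 : W 0 = 0 := le_antisymm (by simpa [hQ0] using hWleQ 0) (hWnonneg 0)
  have claim : ∀ a b, W a ≤ W b + ‖a - b‖ := by
    intro a b
    rw [sub_le_iff_le_add.symm, hW b]
    refine le_ciInf fun y => ?_
    have h1 : W a ≤ Q y + ‖y - a‖ := by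
      rw [hW a]; exact ciInf_le (hBdd a) y
    have h2 : ‖y - a‖ ≤ ‖y - b‖ + ‖a - b‖ := by
      have := norm_sub_le_norm_sub_add_norm_sub y b a
      rwa [norm_sub_rev b a] at this
    linarith
  have hLip : LipschitzWith 1 W := by
    refine LipschitzWith.of_dist_le_mul fun a b => ?_
    rw [NNReal.coe_one, one_mul, Real.dist_eq, dist_eq_norm, abs_sub_le_iff]
    constructor
    · have := claim a b; linarith
    · have := claim b a; rw [norm_sub_rev] at this; linarith
  have hWpos : ∀ x ≠ 0, 0 < W x := by
    intro x hx
    set r : ℝ := ‖x‖ / 2 with hr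
    have hrpos : 0 < r := by
      have := norm_pos_iff.mpr hx
      positivity
    obtain ⟨y0, hy0mem, hmin⟩ :=
      (isCompact_closedBall x r).exists_isMinOn
        ⟨x, Metric.mem_closedBall_self hrpos.le⟩ hQc.continuousOn
    have hy0ne : y0 ≠ 0 := by
      intro h
      rw [h] at hy0mem
      have : dist (0 : EuclideanSpace ℝ (Fin n)) x ≤ r := hy0mem
      rw [dist_eq_norm, zero_sub, norm_neg] at this
      linarith [norm_pos_iff.mpr hx]
    have hm : 0 < Q y0 := hQpos y0 hy0ne
    have hlow : min (Q y0) r ≤ W x := by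
      rw [hW]
      refine le_ciInf fun y => ?_
      by_cases hy : y ∈ Metric.closedBall x r
      · have := hmin hy
        have h2 : min (Q y0) r ≤ Q y0 := min_le_left _ _
        have h3 : (0:ℝ) ≤ ‖y - x‖ := norm_nonneg _
        simp only [Set.mem_setOf_eq] at this
        linarith
      · have : r < dist y x := by simpa [Metric.mem_closedBall] using hy
        rw [dist_eq_norm] at this
        have h2 : min (Q y0) r ≤ r := min_le_right _ _
        linarith [hQnonneg y]
    exact lt_of_lt_of_le (lt_min hm hrpos) hlow
  refine ⟨hQc, ⟨hQ0, hQpos⟩, hLip, ⟨hW0, hWpos⟩, fun x => ?_⟩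
  calc W x ≤ Q x := hWleQ x
    _ = -⟪gradient V x, f x⟫ := hQ x
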